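/- For every graph G, Δ(G) ≤ M(G) ≤ Δ⁺(G). -/

import Mathlib

open SimpleGraph

/-- The set `W` induces a path in `G`. -/
def InducesPath {V : Type*} (G : SimpleGraph V) (W : Set V) : Prop :=
  ∃ n : ℕ, Nonempty ((G.induce W) ≃g SimpleGraph.pathGraph n)

/-- The set `U` is covered by `p` vertex-disjoint induced paths of `G`. -/
def IsPathCoverOn {V : Type*} (G : SimpleGraph V) (U : Set V) (p : ℕ) : Prop :=
  ∃ parts : Fin p → Set V,
    (∀ i, (parts i).Nonempty) ∧
    (Pairwise fun i j => Disjoint (parts i) (parts j)) ∧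
    (⋃ i, parts i) = U ∧
    ∀ i, InducesPath G (parts i)

/-- The induced subgraph of `G` on `U` is a vertex-disjoint union of `p` paths. -/
def IsDisjointPathsOn {V : Type*} (G : SimpleGraph V) (U : Set V) (p : ℕ) : Prop :=
  ∃ parts : Fin p → Set V,
    (∀ i, (parts i).Nonempty) ∧
    (Pairwise fun i j => Disjoint (parts i) (parts j)) ∧
    (⋃ i, parts i) = U ∧
    (∀ i, InducesPath G (parts i)) ∧
    (∀ i j, i ≠ j → ∀ u ∈ parts i, ∀ v ∈ parts j, ¬ G.Adj u v)

/-- The path cover number `P(G)`. -/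
noncomputable def pathCoverNumber {V : Type*} (G : SimpleGraph V) : ℕ :=
  sInf {p | IsPathCoverOn G Set.univ p}

/-- `Δ(G)`: max of `p - q` over deletions of `q` vertices leaving `p` disjoint paths. -/
noncomputable def deltaLow {V : Type*} [Fintype V] (G : SimpleGraph V) : ℤ :=
  sSup {d : ℤ | ∃ (S : Finset V) (p : ℕ),
    IsDisjointPathsOn G ((↑S : Set V)ᶜ) p ∧ d = (p : ℤ) - S.card}

/-- `Δ⁺(G)`: min of `p + q` over deletions of `q` vertices leaving `p` disjoint paths. -/
noncomputable def deltaPlus {V : Type*} [Fintype V] (G : SimpleGraph V) : ℕ :=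
  sInf {k | ∃ (S : Finset V) (p : ℕ),
    IsDisjointPathsOn G ((↑S : Set V)ᶜ) p ∧ k = p + S.card}

/-- `T⁻(G)`. -/
noncomputable def Tminus {V : Type*} [Fintype V] (G : SimpleGraph V) : ℤ :=
  sSup {d : ℤ | ∃ S : Finset V, (G.induce ((↑S : Set V)ᶜ)).IsAcyclic ∧
    d = (pathCoverNumber (G.induce ((↑S : Set V)ᶜ)) : ℤ) - S.card}

/-- `T⁺(G)`. -/
noncomputable def Tplus {V : Type*} [Fintype V] (G : SimpleGraph V) : ℕ :=
  sInf {k | ∃ S : Finset V, (G.induce ((↑S : Set V)ᶜ)).IsAcyclic ∧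
    k = pathCoverNumber (G.induce ((↑S : Set V)ᶜ)) + S.card}

/-- `A` is a symmetric real matrix whose graph is `G`, i.e. `A ∈ S(G)`. -/
def MatchesGraph {V : Type*} [Fintype V] (G : SimpleGraph V) (A : Matrix V V ℝ) : Prop :=
  A.IsSymm ∧ ∀ i j : V, i ≠ j → (A i j ≠ 0 ↔ G.Adj i j)

/-- The nullity of a square real matrix. -/
noncomputable def matNullity {V : Type*} [Fintype V] (A : Matrix V V ℝ) : ℕ :=
  Module.finrank ℝ (LinearMap.ker A.mulVecLin)

/-- `M(G)`: the maximum nullity (= maximum eigenvalue multiplicity). -/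
noncomputable def maxNullity {V : Type*} [Fintype V] [DecidableEq V] (G : SimpleGraph V) : ℕ :=
  sSup {k | ∃ A : Matrix V V ℝ, MatchesGraph G A ∧ matNullity A = k}

/-- `mr(G)`: the minimum rank. -/
noncomputable def minRank {V : Type*} [Fintype V] [DecidableEq V] (G : SimpleGraph V) : ℕ :=
  sInf {k | ∃ A : Matrix V V ℝ, MatchesGraph G A ∧ A.rank = k}

/-- Vertices colored by the zero forcing process started from `B`. -/
inductive ZFClosed {V : Type*} (G : SimpleGraph V) (B : Set V) : V → Prop
  | init (v : V) (h : v ∈ B) : ZFClosed G B v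
  | force (u v : V) (hu : ZFClosed G B u) (huv : G.Adj u v)
      (hforce : ∀ w, G.Adj u w → w ≠ v → ZFClosed G B w) : ZFClosed G B v

/-- `B` is a zero forcing set of `G`. -/
def IsZeroForcingSet {V : Type*} (G : SimpleGraph V) (B : Set V) : Prop :=
  ∀ v, ZFClosed G B v

/-- `Z(G)`: the zero forcing number. -/
noncomputable def zeroForcingNumber {V : Type*} [Fintype V] (G : SimpleGraph V) : ℕ :=
  sInf {k | ∃ B : Finset V, IsZeroForcingSet G ↑B ∧ B.card = k}

/-- The star graph on `Fin n`: vertex `0` adjacent to all others. -/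
def starGraph (n : ℕ) : SimpleGraph (Fin n) :=
  SimpleGraph.fromRel (fun i _ => i.val = 0)

/-- The wheel graph: a hub (`none`) joined to every vertex of a cycle on `Fin m`. -/
def wheelGraph (m : ℕ) : SimpleGraph (Option (Fin m)) :=
  SimpleGraph.fromRel (fun u v =>
    match u, v with
    | none, some _ => True
    | some i, some j => j.val = (i.val + 1) % m
    | _, _ => False)

/-- The `n`-sun: a cycle on `Fin n` (the `inl` vertices) with a pendant vertex
(`inr i`) attached to each cycle vertex (`inl i`). -/
def sunGraph (n : ℕ) : SimpleGraph (Fin n ⊕ Fin n) :=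
  SimpleGraph.fromRel (fun u v =>
    match u, v with
    | .inl i, .inl j => j.val = (i.val + 1) % n
    | .inl i, .inr j => i = j
    | _, _ => False)

lemma path_kernel_zero {V : Type*} [Fintype V] {G : SimpleGraph V} {A : Matrix V V ℝ}
    (hA : MatchesGraph G A) {P : Set V} {n : ℕ}
    (e : (G.induce P) ≃g SimpleGraph.pathGraph n) (x : V → ℝ)
    (hker : ∀ u ∈ P, ∑ v, A u v * x v = 0)
    (hout : ∀ u ∈ P, ∀ v, v ∉ P → A u v * x v = 0)
    (hhead : ∀ h : 0 < n, x ((e.symm ⟨0, h⟩ : P) : V) = 0) :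
    ∀ v ∈ P, x v = 0 := by
  classical
  set vtx : Fin n → V := fun k => ((e.symm k : P) : V) with hvtx
  have hmem : ∀ k, vtx k ∈ P := fun k => (e.symm k).2
  have hinj : Function.Injective vtx := by
    intro a b hab
    exact e.symm.injective (Subtype.ext hab)
  have hadj : ∀ k m, G.Adj (vtx k) (vtx m) ↔ (SimpleGraph.pathGraph n).Adj k m := by
    intro k m
    have := e.symm.map_rel_iff (a := k) (b := m)
    simpa [SimpleGraph.comap_adj] using this
  have hrec : ∀ v (hv : v ∈ P), vtx (e ⟨v, hv⟩) = v := by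
    intro v hv
    simp [hvtx]
  have key : ∀ m : ℕ, ∀ h : m < n, x (vtx ⟨m, h⟩) = 0 := by
    intro m
    induction m using Nat.strong_induction_on with
    | _ m ih =>
      intro h
      match m, ih, h with
      | 0, ih, h =>
        have := hhead (by omega)
        simpa [hvtx] using this
      | t+1, ih, h =>
        have ht : t < n := by omega
        set u : V := vtx ⟨t, ht⟩ with hu
        set w : V := vtx ⟨t+1, h⟩ with hw
        have huw : G.Adj u w := by
          rw [hadj]
          rw [SimpleGraph.pathGraph_adj]
          left; rfl
        have hterm : ∀ v ∈ Finset.univ, v ≠ w → A u v * x v = 0 := by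
          intro v _ hvw
          by_cases hvP : v ∈ P
          · set k : Fin n := e ⟨v, hvP⟩ with hk
            have hvk : vtx k = v := hrec v hvP
            rcases lt_trichotomy (k : ℕ) (t+1) with hlt | heq | hgt
            · have := ih k (by omega) k.isLt
              rw [Fin.eta, hvk] at this
              rw [this, mul_zero]
            · exfalso
              apply hvw
              rw [← hvk, hw]
              congr 1
              exact Fin.ext heq
            · have hne : u ≠ v := by
                rw [← hvk, hu]
                intro hcon
                have := hinj hcon
                have : t = (k : ℕ) := congrArg Fin.val this
                omega
              have hnadj : ¬ G.Adj u v := by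
                rw [← hvk, hu, hadj, SimpleGraph.pathGraph_adj]
                simp only [Fin.val_mk]
                omega
              have : A u v = 0 := by
                by_contra h0
                exact hnadj ((hA.2 u v hne).1 h0)
              rw [this, zero_mul]
          · exact hout u (hmem _) v hvP
        have hsum : ∑ v, A u v * x v = A u w * x w :=
          Finset.sum_eq_single w hterm (fun hcon => absurd (Finset.mem_univ w) hcon)
        have h0 : A u w * x w = 0 := by rw [← hsum]; exact hker u (hmem _)
        have hAne : A u w ≠ 0 := (hA.2 u w huw.ne).2 huw
        exact (mul_eq_zero.mp h0).resolve_left hAne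
  intro v hv
  have := key (e ⟨v, hv⟩) (e ⟨v, hv⟩).isLt
  rwa [Fin.eta, hrec v hv] at this

lemma nullity_le_of_paths {V : Type*} [Fintype V] [DecidableEq V] {G : SimpleGraph V}
    {A : Matrix V V ℝ} (hA : MatchesGraph G A) (S : Finset V) (p : ℕ)
    (h : IsDisjointPathsOn G ((↑S : Set V)ᶜ) p) :
    matNullity A ≤ p + S.card := by
  classical
  obtain ⟨parts, hne, hdisj, hcover, hpath, hcross⟩ := h
  choose n hn using hpath
  have iso : ∀ i, (G.induce (parts i)) ≃g SimpleGraph.pathGraph (n i) := fun i => (hn i).some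
  have npos : ∀ i, 0 < n i := by
    intro i
    obtain ⟨v, hv⟩ := hne i
    exact ((iso i) ⟨v, hv⟩).pos
  set head : Fin p → V := fun i => ((((iso i).symm) ⟨0, npos i⟩ : parts i) : V) with hhead
  set K := LinearMap.ker A.mulVecLin with hK
  set Φ : K →ₗ[ℝ] (Fin p → ℝ) × ({y // y ∈ S} → ℝ) :=
    LinearMap.prod
      (LinearMap.pi fun i => LinearMap.proj (head i) ∘ₗ K.subtype)
      (LinearMap.pi fun s : {y // y ∈ S} => LinearMap.proj (s : V) ∘ₗ K.subtype) with hΦ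
  have hinj : Function.Injective Φ := by
    rw [injective_iff_map_eq_zero]
    intro x hx
    have hx1 : ∀ i, (x : V → ℝ) (head i) = 0 := by
      intro i
      have := congrArg (fun z => z.1 i) hx
      simpa [hΦ] using this
    have hx2 : ∀ v, v ∈ S → (x : V → ℝ) v = 0 := by
      intro v hv
      have := congrArg (fun z => z.2 ⟨v, hv⟩) hx
      simpa [hΦ] using this
    have hker : A.mulVecLin (x : V → ℝ) = 0 := x.2
    have hrow : ∀ u, ∑ v, A u v * (x : V → ℝ) v = 0 := by
      intro u
      have h1 := congrFun hker u
      have h2 : (A.mulVecLin (x : V → ℝ)) u = ∑ v, A u v * (x : V → ℝ) v := by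
        rw [Matrix.mulVecLin_apply]
        rfl
      rw [h2] at h1
      exact h1
    have hzero : ∀ v, (x : V → ℝ) v = 0 := by
      intro v
      by_cases hvS : v ∈ S
      · exact hx2 v hvS
      · have hvW : v ∈ ⋃ i, parts i := by rw [hcover]; simpa using hvS
        obtain ⟨i, hvi⟩ := Set.mem_iUnion.mp hvW
        refine path_kernel_zero hA (iso i) _ (fun u _ => hrow u) ?_ ?_ v hvi
        · intro u huP w hwP
          by_cases hwS : w ∈ S
          · rw [hx2 w hwS, mul_zero]
          · have hwW : w ∈ ⋃ j, parts j := by rw [hcover]; simpa using hwS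
            obtain ⟨j, hwj⟩ := Set.mem_iUnion.mp hwW
            have hji : j ≠ i := fun hji => hwP (hji ▸ hwj)
            have hnadj : ¬ G.Adj u w := hcross i j (Ne.symm hji) u huP w hwj
            have hneq : u ≠ w := fun hh => hwP (hh ▸ huP)
            have hz : A u w = 0 := by
              by_contra h0; exact hnadj ((hA.2 u w hneq).1 h0)
            rw [hz, zero_mul]
        · intro h0
          exact hx1 i
    exact Subtype.ext (funext hzero)
  have hle := LinearMap.finrank_le_finrank_of_injective hinj
  rw [Module.finrank_prod, Module.finrank_fintype_fun_eq_card,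
    Module.finrank_fintype_fun_eq_card, Fintype.card_fin, Fintype.card_coe] at hle
  simpa [matNullity, hK] using hle

lemma exists_matrix_ge {V : Type*} [Fintype V] [DecidableEq V] (G : SimpleGraph V)
    (S : Finset V) (p : ℕ) (h : IsDisjointPathsOn G ((↑S : Set V)ᶜ) p) :
    ∃ A : Matrix V V ℝ, MatchesGraph G A ∧ (p : ℤ) - S.card ≤ matNullity A := by
  classical
  obtain ⟨parts, hne, hdisj, hcover, hpath, hcross⟩ := h
  set deg : V → ℕ := fun u => (Finset.univ.filter (fun v => v ∉ S ∧ G.Adj u v)).card with hdeg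
  set A : Matrix V V ℝ := fun u v =>
    if u = v then (if u ∈ S then 0 else -(deg u : ℝ)) else if G.Adj u v then 1 else 0 with hAdef
  have hAne : ∀ u v, u ≠ v → A u v = if G.Adj u v then 1 else 0 := by
    intro u v huv
    simp only [hAdef]
    rw [if_neg huv]
  have hmatch : MatchesGraph G A := by
    constructor
    · show A.transpose = A
      ext u v
      rw [Matrix.transpose_apply]
      by_cases huv : u = v
      · subst huv; rfl
      · rw [hAne u v huv, hAne v u (Ne.symm huv), G.adj_comm]
    · intro i j hij
      rw [hAne i j hij]
      by_cases hadj : G.Adj i j <;> simp [hadj]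
  set L : (Fin p → ℝ) →ₗ[ℝ] (V → ℝ) :=
    ∑ j : Fin p, (LinearMap.proj j).smulRight (fun v => if v ∈ parts j then (1:ℝ) else 0) with hL
  have hLval : ∀ c v, L c v = ∑ j, c j * (if v ∈ parts j then (1:ℝ) else 0) := by
    intro c v
    simp [hL, LinearMap.sum_apply, Finset.sum_apply, LinearMap.smulRight_apply,
      LinearMap.proj_apply]
  have hnotmem : ∀ j j', j' ≠ j → ∀ v ∈ parts j, v ∉ parts j' := by
    intro j j' hne' v hv hv'
    exact Set.disjoint_left.mp (hdisj hne') hv' hv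
  have hval : ∀ c j v, v ∈ parts j → L c v = c j := by
    intro c j v hv
    rw [hLval, Finset.sum_eq_single j]
    · simp [hv]
    · intro b _ hb
      simp [hnotmem j b hb v hv]
    · intro hcon; exact absurd (Finset.mem_univ j) hcon
  have hnopart : ∀ v, v ∈ S → ∀ j, v ∉ parts j := by
    intro v hv j hvj
    have hmem : v ∈ ⋃ i, parts i := Set.mem_iUnion.mpr ⟨j, hvj⟩
    rw [hcover] at hmem
    exact hmem (by simpa using hv)
  have hvalS : ∀ c v, v ∈ S → L c v = 0 := by
    intro c v hv
    rw [hLval]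
    apply Finset.sum_eq_zero
    intro j _
    simp [hnopart v hv j]
  have hLinj : Function.Injective L := by
    rw [injective_iff_map_eq_zero]
    intro c hc
    funext j
    obtain ⟨v, hv⟩ := hne j
    have h0 : L c v = 0 := congrFun hc v
    rw [hval c j v hv] at h0
    simpa using h0
  have hmain : ∀ (c : Fin p → ℝ) u, u ∉ S → A.mulVec (L c) u = 0 := by
    intro c u huS
    have huW : u ∈ ⋃ i, parts i := by rw [hcover]; simpa using huS
    obtain ⟨i₀, hui⟩ := Set.mem_iUnion.mp huW
    have hterm : ∀ v, A u v * L c v =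
        (if v ∈ parts i₀ ∧ G.Adj u v then c i₀ else 0)
          + (if v = u then -(deg u : ℝ) * c i₀ else 0) := by
      intro v
      by_cases hvu : v = u
      · subst hvu
        rw [hval c i₀ v hui]
        have hAvv : A v v = -(deg v : ℝ) := by
          simp only [hAdef]
          simp [huS]
        rw [hAvv, if_pos rfl, if_neg (fun hcon => G.irrefl hcon.2)]
        ring
      · rw [if_neg hvu, add_zero, hAne u v (fun hh => hvu hh.symm)]
        by_cases hadj : G.Adj u v
        · rw [if_pos hadj, one_mul]
          by_cases hvS : v ∈ S
          · rw [hvalS c v hvS, if_neg (fun hcon => hnopart v hvS i₀ hcon.1)]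
          · have hvW : v ∈ ⋃ i, parts i := by rw [hcover]; simpa using hvS
            obtain ⟨j, hvj⟩ := Set.mem_iUnion.mp hvW
            have hj : j = i₀ := by
              by_contra hji
              exact hcross i₀ j (fun hh => hji hh.symm) u hui v hvj hadj
            subst hj
            rw [hval c j v hvj, if_pos ⟨hvj, hadj⟩]
        · rw [if_neg hadj, zero_mul, if_neg (fun hcon => hadj hcon.2)]
    have hmv : A.mulVec (L c) u = ∑ v, A u v * L c v := rfl
    rw [hmv, Finset.sum_congr rfl (fun v _ => hterm v), Finset.sum_add_distrib,
      Finset.sum_ite_eq' Finset.univ u (fun _ => -(deg u : ℝ) * c i₀),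
      if_pos (Finset.mem_univ u), Finset.sum_ite, Finset.sum_const, Finset.sum_const_zero,
      add_zero]
    have hcard : (Finset.univ.filter (fun v => v ∈ parts i₀ ∧ G.Adj u v)).card = deg u := by
      rw [hdeg]
      congr 1
      apply Finset.filter_congr
      intro v _
      constructor
      · rintro ⟨hvp, hadj⟩
        exact ⟨fun hvS => hnopart v hvS i₀ hvp, hadj⟩
      · rintro ⟨hvS, hadj⟩
        have hvW : v ∈ ⋃ i, parts i := by rw [hcover]; simpa using hvS
        obtain ⟨j, hvj⟩ := Set.mem_iUnion.mp hvW
        have hj : j = i₀ := by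
          by_contra hji
          exact hcross i₀ j (fun hh => hji hh.symm) u hui v hvj hadj
        exact ⟨hj ▸ hvj, hadj⟩
    rw [hcard, nsmul_eq_mul]
    ring
  set g : (Fin p → ℝ) →ₗ[ℝ] ({y // y ∈ S} → ℝ) :=
    (LinearMap.pi fun s : {y // y ∈ S} => LinearMap.proj (s : V)) ∘ₗ A.mulVecLin ∘ₗ L with hg
  have hmaple : Submodule.map L (LinearMap.ker g) ≤ LinearMap.ker A.mulVecLin := by
    intro y hy
    obtain ⟨c, hc, rfl⟩ := Submodule.mem_map.mp hy
    have hc' : g c = 0 := hc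
    rw [LinearMap.mem_ker, Matrix.mulVecLin_apply]
    funext u
    by_cases huS : u ∈ S
    · have h3 := congrFun hc ⟨u, huS⟩
      simpa [hg, Matrix.mulVecLin_apply] using h3
    · exact hmain c u huS
  have e1 : Module.finrank ℝ (LinearMap.ker g) =
      Module.finrank ℝ (Submodule.map L (LinearMap.ker g)) :=
    (Submodule.equivMapOfInjective L hLinj (LinearMap.ker g)).finrank_eq
  have e2 : Module.finrank ℝ (Submodule.map L (LinearMap.ker g)) ≤ matNullity A :=
    Submodule.finrank_mono hmaple
  have e5 : Module.finrank ℝ (LinearMap.ker g) ≤ matNullity A := e1 ▸ e2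
  have e3 := LinearMap.finrank_range_add_finrank_ker g
  rw [Module.finrank_fintype_fun_eq_card, Fintype.card_fin] at e3
  have e4 : Module.finrank ℝ (LinearMap.range g) ≤ S.card := by
    have h6 := Submodule.finrank_le (LinearMap.range g)
    rwa [Module.finrank_fintype_fun_eq_card, Fintype.card_coe] at h6
  exact ⟨A, hmatch, by omega⟩

lemma trivial_paths {V : Type*} [Fintype V] (G : SimpleGraph V) :
    IsDisjointPathsOn G ((↑(Finset.univ : Finset V) : Set V)ᶜ) 0 := by
  refine ⟨fun i => i.elim0, fun i => i.elim0, ?_, ?_, fun i => i.elim0, fun i => i.elim0⟩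
  · intro i
    exact i.elim0
  · rw [Set.iUnion_of_empty]
    simp

theorem deltaLow_le_maxNullity_le_deltaPlus {V : Type*} [Fintype V] [DecidableEq V]
    (G : SimpleGraph V) :
    deltaLow G ≤ (maxNullity G : ℤ) ∧ maxNullity G ≤ deltaPlus G := by
  classical
  have htriv := trivial_paths G
  have hbdd : BddAbove {k | ∃ A : Matrix V V ℝ, MatchesGraph G A ∧ matNullity A = k} := by
    refine ⟨Fintype.card V, ?_⟩
    rintro k ⟨A, -, rfl⟩
    have h1 := Submodule.finrank_le (LinearMap.ker A.mulVecLin)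
    rwa [Module.finrank_fintype_fun_eq_card] at h1
  have hA0 : ∃ A : Matrix V V ℝ, MatchesGraph G A := by
    refine ⟨fun i j => if G.Adj i j then 1 else 0, ?_, ?_⟩
    · show Matrix.transpose _ = _
      ext i j
      change (if G.Adj j i then (1:ℝ) else 0) = if G.Adj i j then 1 else 0
      rw [G.adj_comm]
    · intro i j hij
      by_cases h : G.Adj i j <;> simp [h]
  constructor
  · unfold deltaLow
    apply csSup_le
    · exact ⟨_, Finset.univ, 0, htriv, rfl⟩
    · rintro d ⟨S, p, hS, rfl⟩
      obtain ⟨A, hA, hle⟩ := exists_matrix_ge G S p hS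
      refine hle.trans ?_
      have hmax : matNullity A ≤ maxNullity G := by
        unfold maxNullity
        exact le_csSup hbdd ⟨A, hA, rfl⟩
      exact_mod_cast hmax
  · unfold deltaPlus
    apply le_csInf
    · exact ⟨_, Finset.univ, 0, htriv, rfl⟩
    · rintro k ⟨S, p, hS, rfl⟩
      obtain ⟨A0, hA0'⟩ := hA0
      unfold maxNullity
      refine csSup_le ⟨matNullity A0, A0, hA0', rfl⟩ ?_
      rintro m ⟨A, hA, rfl⟩
      exact nullity_le_of_paths hA S p hS
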